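/- There is no finite (positive) measure μ on ℝ such that for all integers d ≥ 0, ∫ 1/(e^{ηd}+1) dμ(η) = (1/2)ξ^d, where 0 < ξ < 1 is fixed. -/

import Mathlib

open MeasureTheory Filter Set Topology

namespace Stmt15Aux

noncomputable def F (d : ℕ) (η : ℝ) : ℝ := 1 / (Real.exp (η * d) + 1)

lemma F_pos (d : ℕ) (η : ℝ) : 0 < F d η := by
  have h := Real.exp_pos (η * d)
  unfold F; positivity

lemma F_le_one (d : ℕ) (η : ℝ) : F d η ≤ 1 := by
  have h := Real.exp_pos (η * d)
  rw [F, div_le_one (by linarith)]; linarith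

lemma F_mono (d : ℕ) {a b : ℝ} (h : a ≤ b) : F d b ≤ F d a := by
  have h1 := Real.exp_pos (a * d)
  have h2 : Real.exp (a * d) ≤ Real.exp (b * d) :=
    Real.exp_le_exp.mpr (mul_le_mul_of_nonneg_right h (Nat.cast_nonneg d))
  exact one_div_le_one_div_of_le (by linarith) (by linarith)

lemma F_cont (d : ℕ) : Continuous (F d) := by
  have h : Continuous fun η : ℝ => Real.exp (η * d) + 1 :=
    (Real.continuous_exp.comp (continuous_id.mul continuous_const)).add continuous_const
  exact continuous_const.div h (fun x => by positivity)

lemma F_int (μ : Measure ℝ) [IsFiniteMeasure μ] (d : ℕ) : Integrable (F d) μ := by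
  apply Integrable.mono' (integrable_const (1 : ℝ)) (F_cont d).aestronglyMeasurable
  filter_upwards with x
  rw [Real.norm_eq_abs, abs_of_pos (F_pos d x)]
  exact F_le_one d x

lemma F_lower {a : ℝ} (ha : 0 ≤ a) (d : ℕ) {η : ℝ} (hη : η ≤ a) :
    Real.exp (-(a * d)) / 2 ≤ F d η := by
  have h1 : Real.exp (η * d) ≤ Real.exp (a * d) :=
    Real.exp_le_exp.mpr (mul_le_mul_of_nonneg_right hη (Nat.cast_nonneg d))
  have h2 : (1 : ℝ) ≤ Real.exp (a * d) := by
    rw [← Real.exp_zero]; exact Real.exp_le_exp.mpr (by positivity)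
  have h3 := Real.exp_pos (η * d)
  calc Real.exp (-(a * d)) / 2 = 1 / (2 * Real.exp (a * d)) := by
        rw [Real.exp_neg]; field_simp
    _ ≤ 1 / (Real.exp (η * d) + 1) := one_div_le_one_div_of_le (by linarith) (by linarith)
    _ = F d η := rfl

lemma F_upper {a : ℝ} (d : ℕ) {η : ℝ} (hη : a ≤ η) : F d η ≤ Real.exp (-(a * d)) := by
  have h1 : Real.exp (a * d) ≤ Real.exp (η * d) :=
    Real.exp_le_exp.mpr (mul_le_mul_of_nonneg_right hη (Nat.cast_nonneg d))
  have h2 := Real.exp_pos (a * d)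
  have h3 := Real.exp_pos (η * d)
  calc F d η = 1 / (Real.exp (η * d) + 1) := rfl
    _ ≤ 1 / Real.exp (a * d) := one_div_le_one_div_of_le h2 (by linarith)
    _ = Real.exp (-(a * d)) := by rw [Real.exp_neg, one_div]

lemma exp_pow (a : ℝ) (d : ℕ) : Real.exp (a * d) = Real.exp a ^ d := by
  rw [mul_comm, Real.exp_nat_mul]

lemma F_val {ρ t : ℝ} (hρ : 0 < ρ) (ht : Real.exp t = ρ⁻¹) (d : ℕ) :
    F d t = ρ ^ d / (1 + ρ ^ d) := by
  have he : Real.exp (t * d) = (ρ ^ d)⁻¹ := by rw [exp_pow, ht, inv_pow]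
  have hne : (ρ : ℝ) ^ d ≠ 0 := pow_ne_zero _ hρ.ne'
  rw [F, he]
  rw [div_eq_div_iff (by positivity) (by positivity)]
  field_simp

/-- If the set integrals of `F d` over `s ⊆ Iic a` decay like `C * r^d` with
`exp a * r < 1`, then `s` is null. -/
lemma null_lemma (μ : Measure ℝ) [IsFiniteMeasure μ] {a r C : ℝ}
    (ha : 0 ≤ a) (hr : 0 ≤ r) (hC : 0 ≤ C) (hra : Real.exp a * r < 1)
    {s : Set ℝ} (hs : MeasurableSet s) (hsub : s ⊆ Set.Iic a)
    (hbound : ∀ d : ℕ, ∫ η in s, F d η ∂μ ≤ C * r ^ d) : μ s = 0 := by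
  set m := (μ s).toReal with hm
  have hm0 : 0 ≤ m := ENNReal.toReal_nonneg
  have key : ∀ d : ℕ, m ≤ 2 * C * (Real.exp a * r) ^ d := by
    intro d
    have h1 : Real.exp (-(a * d)) / 2 * m ≤ ∫ η in s, F d η ∂μ :=
      setIntegral_ge_of_const_le_real hs (measure_ne_top μ s)
        (fun x hx => F_lower ha d (hsub hx)) ((F_int μ d).integrableOn)
    have h2 : Real.exp (-(a * d)) / 2 * m ≤ C * r ^ d := h1.trans (hbound d)
    have hep : (0 : ℝ) < Real.exp (a * d) := Real.exp_pos _
    have h3 : m ≤ 2 * Real.exp (a * d) * (C * r ^ d) := by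
      have h4 := mul_le_mul_of_nonneg_left h2 (le_of_lt (by positivity : (0:ℝ) < 2 * Real.exp (a * d)))
      calc m = 2 * Real.exp (a * d) * (Real.exp (-(a * d)) / 2 * m) := by
            rw [Real.exp_neg]; field_simp
        _ ≤ 2 * Real.exp (a * d) * (C * r ^ d) := h4
    calc m ≤ 2 * Real.exp (a * d) * (C * r ^ d) := h3
      _ = 2 * C * (Real.exp a * r) ^ d := by rw [exp_pow, mul_pow]; ring
  have hlim : Tendsto (fun d : ℕ => 2 * C * (Real.exp a * r) ^ d) atTop (𝓝 0) := by
    have := (tendsto_pow_atTop_nhds_zero_of_lt_one (by positivity) hra).const_mul (2 * C)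
    simpa using this
  have hm0' : m ≤ 0 := ge_of_tendsto' hlim key
  have : m = 0 := le_antisymm hm0' hm0
  rw [hm] at this
  rcases (ENNReal.toReal_eq_zero_iff _).mp this with h | h
  · exact h
  · exact absurd h (measure_ne_top μ s)

lemma nullIio (μ : Measure ℝ) [IsFiniteMeasure μ] {U : Set ℝ} {T r C : ℝ}
    (hU : MeasurableSet U) (hT : 0 < T) (hr0 : 0 < r) (hC : 0 ≤ C)
    (hrT : Real.exp T * r ≤ 1)
    (hbound : ∀ d : ℕ, ∫ η in U, F d η ∂μ ≤ C * r ^ d) :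
    μ (U ∩ Set.Iio T) = 0 := by
  set A : ℕ → Set ℝ := fun n => U ∩ Set.Iic (max 0 (T - 1 / (n + 1))) with hA
  have hcover : U ∩ Set.Iio T ⊆ ⋃ n, A n := by
    rintro x ⟨hxU, hxT⟩
    rcases le_or_gt x 0 with hx0 | hx0
    · exact Set.mem_iUnion.mpr ⟨0, hxU, hx0.trans (le_max_left _ _)⟩
    · obtain ⟨n, hn⟩ := exists_nat_one_div_lt (sub_pos.mpr (show x < T from hxT))
      have hx1 : x ≤ T - 1 / ((n:ℝ) + 1) := by linarith
      exact Set.mem_iUnion.mpr ⟨n, hxU, hx1.trans (le_max_right _ _)⟩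
  have hnull : ∀ n, μ (A n) = 0 := by
    intro n
    have hpos : (0:ℝ) < 1 / ((n:ℝ) + 1) := by positivity
    have han : max 0 (T - 1 / (n + 1)) < T := max_lt hT (by linarith)
    have hea : Real.exp (max 0 (T - 1 / (n + 1))) * r < 1 :=
      lt_of_lt_of_le (by
        have := Real.exp_lt_exp.mpr han
        exact mul_lt_mul_of_pos_right this hr0) hrT
    apply null_lemma μ (le_max_left _ _) hr0.le hC hea
      (hU.inter measurableSet_Iic) Set.inter_subset_right
    intro d
    refine le_trans ?_ (hbound d)
    apply setIntegral_mono_set ((F_int μ d).integrableOn)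
      (by filter_upwards with x using (F_pos d x).le)
      (HasSubset.Subset.eventuallyLE Set.inter_subset_left)
  exact measure_mono_null hcover (measure_iUnion_null hnull)

lemma half_lemma (μ : Measure ℝ) [IsFiniteMeasure μ] {t ρ : ℝ}
    (ht : 0 < t) (hρ0 : 0 < ρ) (hρ1 : ρ < 1) (hexp : Real.exp t = ρ⁻¹)
    (hM : (μ Set.univ).toReal = 1)
    {β : ℕ → ℝ} (hβ : Tendsto β atTop (𝓝 (1 / 2)))
    (heq : ∀ d : ℕ, ∫ η in Set.Ici t, F d η ∂μ = ρ ^ d * β d) :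
    ∀ d : ℕ, ∫ η in Set.Ioi t, F d η ∂μ = ρ ^ d * (β d - (1 / 2) / (1 + ρ ^ d)) := by
  have hρd : ∀ d : ℕ, (0:ℝ) < 1 + ρ ^ d := fun d => by positivity
  -- step (a): mass of Icc t a is at least 1/2 for every a > t
  have stepA : ∀ a : ℝ, t < a → 1 / 2 ≤ (μ (Set.Icc t a)).toReal := by
    intro a hta
    set m := (μ (Set.Icc t a)).toReal with hmdef
    have hineq : ∀ d : ℕ, β d ≤ m / (1 + ρ ^ d) + (Real.exp (t - a)) ^ d := by
      intro d
      have hsplit : ∫ η in Set.Ici t, F d η ∂μ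
          = (∫ η in Set.Icc t a, F d η ∂μ) + ∫ η in Set.Ioi a, F d η ∂μ := by
        rw [← Set.Icc_union_Ioi_eq_Ici hta.le]
        exact setIntegral_union ((Set.Iic_disjoint_Ioi le_rfl).mono_left Set.Icc_subset_Iic_self)
          measurableSet_Ioi ((F_int μ d).integrableOn) ((F_int μ d).integrableOn)
      have hb1 : ∫ η in Set.Icc t a, F d η ∂μ ≤ F d t * m := by
        calc ∫ η in Set.Icc t a, F d η ∂μ ≤ ∫ _η in Set.Icc t a, F d t ∂μ :=
              setIntegral_mono_on ((F_int μ d).integrableOn)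
                ((integrableOn_const_iff).mpr (Or.inr (measure_lt_top μ _)))
                measurableSet_Icc (fun x hx => F_mono d hx.1)
          _ = F d t * m := by rw [setIntegral_const, smul_eq_mul, mul_comm]; rfl
      have hb2 : ∫ η in Set.Ioi a, F d η ∂μ ≤ Real.exp (-(a * d)) := by
        have hμa : (μ (Set.Ioi a)).toReal ≤ 1 := by
          rw [← hM]
          exact ENNReal.toReal_mono (measure_ne_top μ _) (measure_mono (Set.subset_univ _))
        calc ∫ η in Set.Ioi a, F d η ∂μ ≤ ∫ _η in Set.Ioi a, Real.exp (-(a * d)) ∂μ :=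
              setIntegral_mono_on ((F_int μ d).integrableOn)
                ((integrableOn_const_iff).mpr (Or.inr (measure_lt_top μ _)))
                measurableSet_Ioi (fun x hx => F_upper d (le_of_lt hx))
          _ = (μ (Set.Ioi a)).toReal * Real.exp (-(a * d)) := by
              rw [setIntegral_const, smul_eq_mul]; rfl
          _ ≤ Real.exp (-(a * d)) := by
              nlinarith [Real.exp_pos (-(a * (d:ℝ)))]
      have hFt : F d t = ρ ^ d / (1 + ρ ^ d) := F_val hρ0 hexp d
      have hexpa : Real.exp (-(a * d)) = ρ ^ d * (Real.exp (t - a)) ^ d := by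
        have hρe : ρ = Real.exp (-t) := by rw [Real.exp_neg, hexp, inv_inv]
        rw [hρe, ← Real.exp_nat_mul, ← Real.exp_nat_mul, ← Real.exp_add]
        congr 1; push_cast; ring
      have hmain : ρ ^ d * β d ≤ ρ ^ d * (m / (1 + ρ ^ d) + (Real.exp (t - a)) ^ d) := by
        rw [← heq d, hsplit]
        have : F d t * m = ρ ^ d * (m / (1 + ρ ^ d)) := by
          rw [hFt]; field_simp
        calc (∫ η in Set.Icc t a, F d η ∂μ) + ∫ η in Set.Ioi a, F d η ∂μ
            ≤ F d t * m + Real.exp (-(a * d)) := add_le_add hb1 hb2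
          _ = ρ ^ d * (m / (1 + ρ ^ d) + (Real.exp (t - a)) ^ d) := by
              rw [this, hexpa]; ring
      exact le_of_mul_le_mul_left hmain (pow_pos hρ0 d)
    have hlim : Tendsto (fun d : ℕ => m / (1 + ρ ^ d) + (Real.exp (t - a)) ^ d) atTop
        (𝓝 m) := by
      have h1 : Tendsto (fun d : ℕ => ρ ^ d) atTop (𝓝 0) :=
        tendsto_pow_atTop_nhds_zero_of_lt_one hρ0.le hρ1
      have h2 : Tendsto (fun d : ℕ => m * (1 + ρ ^ d)⁻¹) atTop (𝓝 (m * (1 + (0:ℝ))⁻¹)) :=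
        Tendsto.const_mul m ((h1.const_add 1).inv₀ (by norm_num))
      have h3 : Tendsto (fun d : ℕ => (Real.exp (t - a)) ^ d) atTop (𝓝 0) :=
        tendsto_pow_atTop_nhds_zero_of_lt_one (Real.exp_pos _).le
          (by rw [← Real.exp_zero]; exact Real.exp_lt_exp.mpr (by linarith))
      have h4 := h2.add h3
      simpa [div_eq_mul_inv] using h4
    exact le_of_tendsto_of_tendsto' hβ hlim hineq
  -- step (b): μ {t} ≥ 1/2
  have hsing_ge : 1 / 2 ≤ (μ {t}).toReal := by
    have hiInter : (⋂ n : ℕ, Set.Icc t (t + 1 / (n + 1))) = {t} := by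
      ext x
      simp only [Set.mem_iInter, Set.mem_Icc, Set.mem_singleton_iff]
      constructor
      · intro h
        refine le_antisymm ?_ (h 0).1
        by_contra hx
        push_neg at hx
        obtain ⟨n, hn⟩ := exists_nat_one_div_lt (sub_pos.mpr hx)
        have := (h n).2
        linarith
      · rintro rfl
        refine fun n => ⟨le_refl _, ?_⟩
        have : (0:ℝ) < 1 / ((n:ℝ) + 1) := by positivity
        linarith
    have hanti : Antitone (fun n : ℕ => Set.Icc t (t + 1 / (n + 1))) := by
      intro n k hnk
      have h1 : (0:ℝ) < (n:ℝ) + 1 := by positivity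
      have h2 : ((n:ℝ) + 1) ≤ (k:ℝ) + 1 := by
        have : (n:ℝ) ≤ (k:ℝ) := Nat.cast_le.mpr hnk
        linarith
      have h3 := one_div_le_one_div_of_le h1 h2
      exact Set.Icc_subset_Icc_right (by linarith)
    have htend := tendsto_measure_iInter_atTop
      (μ := μ) (s := fun n : ℕ => Set.Icc t (t + 1 / (n + 1)))
      (fun n => measurableSet_Icc.nullMeasurableSet) hanti ⟨0, measure_ne_top μ _⟩
    rw [hiInter] at htend
    have htoReal := (ENNReal.tendsto_toReal (measure_ne_top μ {t})).comp htend
    refine ge_of_tendsto' htoReal (fun n => ?_)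
    refine stepA (t + 1 / (n + 1)) ?_
    have : (0:ℝ) < 1 / ((n:ℝ) + 1) := by positivity
    linarith
  -- step (c): μ {t} ≤ 1/2
  have hsing_le : (μ {t}).toReal ≤ 1 / 2 := by
    set c := (μ {t}).toReal with hcdef
    have hineq : ∀ d : ℕ, c ≤ β d * (1 + ρ ^ d) := by
      intro d
      have h1 : F d t * c ≤ ∫ η in ({t} : Set ℝ), F d η ∂μ :=
        setIntegral_ge_of_const_le_real (measurableSet_singleton t) (measure_ne_top μ _)
          (fun x hx => by rw [Set.mem_singleton_iff] at hx; rw [hx])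
          ((F_int μ d).integrableOn)
      have h2 : ∫ η in ({t} : Set ℝ), F d η ∂μ ≤ ∫ η in Set.Ici t, F d η ∂μ :=
        setIntegral_mono_set ((F_int μ d).integrableOn)
          (by filter_upwards with x using (F_pos d x).le)
          (HasSubset.Subset.eventuallyLE (Set.singleton_subset_iff.mpr Set.self_mem_Ici))
      have h3 : F d t * c ≤ ρ ^ d * β d := by rw [← heq d]; exact h1.trans h2
      rw [F_val hρ0 hexp d] at h3
      have h4 : ρ ^ d * (c / (1 + ρ ^ d)) ≤ ρ ^ d * β d := by
        have he : ρ ^ d * (c / (1 + ρ ^ d)) = ρ ^ d / (1 + ρ ^ d) * c := by ring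
        rw [he]; exact h3
      have h5 : c / (1 + ρ ^ d) ≤ β d := le_of_mul_le_mul_left h4 (pow_pos hρ0 d)
      rw [div_le_iff₀ (hρd d)] at h5
      exact h5
    have hlim : Tendsto (fun d : ℕ => β d * (1 + ρ ^ d)) atTop (𝓝 (1 / 2)) := by
      have h1 : Tendsto (fun d : ℕ => ρ ^ d) atTop (𝓝 0) :=
        tendsto_pow_atTop_nhds_zero_of_lt_one hρ0.le hρ1
      have := hβ.mul ((h1.const_add 1))
      simpa using this
    exact ge_of_tendsto' hlim hineq
  have hsing : (μ {t}).toReal = 1 / 2 := le_antisymm hsing_le hsing_ge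
  -- step (d): conclusion
  intro d
  have hsplit : ∫ η in Set.Ici t, F d η ∂μ
      = (∫ η in ({t} : Set ℝ), F d η ∂μ) + ∫ η in Set.Ioi t, F d η ∂μ := by
    have hu : ({t} : Set ℝ) ∪ Set.Ioi t = Set.Ici t := by
      rw [← Set.Icc_self, Set.Icc_union_Ioi_eq_Ici le_rfl]
    rw [← hu]
    exact setIntegral_union
      ((Set.Iic_disjoint_Ioi le_rfl).mono_left (by simp))
      measurableSet_Ioi ((F_int μ d).integrableOn) ((F_int μ d).integrableOn)
  have hsingint : ∫ η in ({t} : Set ℝ), F d η ∂μ = F d t * (1 / 2) := by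
    have : ∫ η in ({t} : Set ℝ), F d η ∂μ = ∫ _η in ({t} : Set ℝ), F d t ∂μ :=
      setIntegral_congr_fun (measurableSet_singleton t)
        (fun x hx => by rw [Set.mem_singleton_iff] at hx; rw [hx])
    rw [this, setIntegral_const, Measure.real, hsing, smul_eq_mul, mul_comm]
  have := heq d
  rw [hsplit, hsingint, F_val hρ0 hexp d] at this
  have h0 : (0:ℝ) < 1 + ρ ^ d := hρd d
  have : ∫ η in Set.Ioi t, F d η ∂μ = ρ ^ d * β d - ρ ^ d / (1 + ρ ^ d) * (1 / 2) := by
    linarith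
  rw [this]
  field_simp

end Stmt15Aux

open Stmt15Aux

theorem stmt_15 (ξ : ℝ) (hξ0 : 0 < ξ) (hξ1 : ξ < 1) :
    ¬ ∃ μ : Measure ℝ, IsFiniteMeasure μ ∧
      ∀ d : ℕ, ∫ η, 1 / (Real.exp (η * d) + 1) ∂μ = ξ ^ d / 2 := by
  rintro ⟨μ, hfin, hint⟩
  haveI := hfin
  have hint' : ∀ d : ℕ, ∫ η, F d η ∂μ = ξ ^ d / 2 := fun d => hint d
  -- total mass is 1
  have hM : (μ Set.univ).toReal = 1 := by
    have h0 := hint' 0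
    have hfun : (fun η : ℝ => F 0 η) = fun _ => (1 / 2 : ℝ) := by
      funext η; norm_num [F]
    rw [hfun, integral_const, smul_eq_mul, pow_zero] at h0
    rw [Measure.real] at h0
    linarith
  set L := Real.log ξ⁻¹ with hLdef
  have hinv1 : 1 < ξ⁻¹ := (one_lt_inv₀ hξ0).mpr hξ1
  have hL : 0 < L := Real.log_pos hinv1
  have hexpL : Real.exp L = ξ⁻¹ := Real.exp_log (inv_pos.mpr hξ0)
  -- μ vanishes below L
  have hIioL : μ (Set.Iio L) = 0 := by
    have h := nullIio μ (U := Set.univ) (T := L) (r := ξ) (C := 1/2)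
      MeasurableSet.univ hL hξ0 (by norm_num)
      (by rw [hexpL, inv_mul_cancel₀ hξ0.ne'])
      (fun d => by rw [Measure.restrict_univ, hint' d]; ring_nf; exact le_refl _)
    simpa using h
  have heq1 : ∀ d : ℕ, ∫ η in Set.Ici L, F d η ∂μ = ξ ^ d * (1 / 2) := by
    intro d
    have hsplit : (∫ η in Set.Iio L, F d η ∂μ) + ∫ η in (Set.Iio L)ᶜ, F d η ∂μ
        = ∫ η, F d η ∂μ := integral_add_compl measurableSet_Iio (F_int μ d)
    rw [Set.compl_Iio] at hsplit
    have hz : ∫ η in Set.Iio L, F d η ∂μ = 0 := by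
      rw [Measure.restrict_eq_zero.mpr hIioL, integral_zero_measure]
    rw [hz, zero_add] at hsplit
    rw [hsplit, hint' d]; ring
  -- first application of half lemma
  have hhalf1 := half_lemma μ hL hξ0 hξ1 hexpL hM
    (β := fun _ => (1/2 : ℝ)) tendsto_const_nhds heq1
  have hIoiL : ∀ d : ℕ, ∫ η in Set.Ioi L, F d η ∂μ = (ξ ^ 2) ^ d * (1 / (2 * (1 + ξ ^ d))) := by
    intro d
    rw [hhalf1 d]
    have h1 : (0:ℝ) < 1 + ξ ^ d := by positivity
    have h2 : ((ξ:ℝ) ^ 2) ^ d = (ξ ^ d) ^ 2 := by ring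
    rw [h2]
    field_simp
    ring
  -- μ vanishes on (L, 2L)
  have hbound2 : ∀ d : ℕ, ∫ η in Set.Ioi L, F d η ∂μ ≤ (1/2) * (ξ ^ 2) ^ d := by
    intro d
    rw [hIoiL d]
    have h1 : (0:ℝ) < 1 + ξ ^ d := by positivity
    have hp : (0:ℝ) ≤ (ξ ^ 2) ^ d := by positivity
    have h2 : 1 / (2 * (1 + ξ ^ d)) ≤ 1 / 2 := one_div_le_one_div_of_le (by norm_num) (by nlinarith [pow_pos hξ0 d])
    nlinarith
  have hIooNull : μ (Set.Ioo L (2 * L)) = 0 := by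
    have hrT : Real.exp (2 * L) * ξ ^ 2 ≤ 1 := by
      rw [show (2:ℝ) * L = L + L by ring, Real.exp_add, hexpL]
      rw [sq]
      field_simp
      norm_num
    have h := nullIio μ (U := Set.Ioi L) (T := 2 * L) (r := ξ ^ 2) (C := 1/2)
      measurableSet_Ioi (by linarith) (by positivity) (by norm_num) hrT hbound2
    rwa [Set.Ioi_inter_Iio] at h
  have heq2 : ∀ d : ℕ, ∫ η in Set.Ici (2 * L), F d η ∂μ
      = (ξ ^ 2) ^ d * (1 / (2 * (1 + ξ ^ d))) := by
    intro d
    have hu : Set.Ioo L (2 * L) ∪ Set.Ici (2 * L) = Set.Ioi L :=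
      Set.Ioo_union_Ici_eq_Ioi (by linarith)
    have hsplit : ∫ η in Set.Ioi L, F d η ∂μ
        = (∫ η in Set.Ioo L (2 * L), F d η ∂μ) + ∫ η in Set.Ici (2 * L), F d η ∂μ := by
      rw [← hu]
      have hdisj : Disjoint (Set.Ioo L (2 * L)) (Set.Ici (2 * L)) := by
        rw [Set.disjoint_left]
        intro x hx hx'
        exact absurd hx.2 (not_lt.mpr hx')
      exact setIntegral_union hdisj
        measurableSet_Ici ((F_int μ d).integrableOn) ((F_int μ d).integrableOn)
    have hz : ∫ η in Set.Ioo L (2 * L), F d η ∂μ = 0 := by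
      rw [Measure.restrict_eq_zero.mpr hIooNull, integral_zero_measure]
    rw [hz, zero_add] at hsplit
    rw [← hsplit, hIoiL d]
  have hexp2L : Real.exp (2 * L) = (ξ ^ 2)⁻¹ := by
    rw [show (2:ℝ) * L = L + L by ring, Real.exp_add, hexpL, sq, mul_inv]
  have hβ' : Tendsto (fun d : ℕ => 1 / (2 * (1 + ξ ^ d))) atTop (𝓝 (1 / 2)) := by
    have h1 : Tendsto (fun d : ℕ => ξ ^ d) atTop (𝓝 0) :=
      tendsto_pow_atTop_nhds_zero_of_lt_one hξ0.le hξ1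
    have h2 := ((h1.const_add 1).const_mul 2).inv₀ (by norm_num)
    simpa [one_div] using h2
  have hhalf2 := half_lemma μ (t := 2 * L) (ρ := ξ ^ 2) (by linarith) (by positivity)
    (by nlinarith) hexp2L hM hβ' heq2
  -- contradiction at d = 1
  have hpos : 0 ≤ ∫ η in Set.Ioi (2 * L), F 1 η ∂μ :=
    setIntegral_nonneg measurableSet_Ioi (fun x _ => (F_pos 1 x).le)
  rw [hhalf2 1] at hpos
  have h1 : (0:ℝ) < 1 + ξ := by linarith
  have h2 : (0:ℝ) < 1 + ξ ^ 2 := by positivity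
  have h3 : (1:ℝ) / (2 * (1 + ξ ^ 1)) < (1 / 2) / (1 + (ξ ^ 2) ^ 1) := by
    rw [pow_one, pow_one, div_div]
    exact one_div_lt_one_div_of_lt (by nlinarith) (by nlinarith)
  have h4 : (0:ℝ) < (ξ ^ 2) ^ 1 := by positivity
  nlinarith [mul_pos h4 (sub_pos.mpr h3)]
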